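/- Let k > 0, 1 < α ≤ 2, and for φ ∈ H^1(R^3) set s(λ) = S_k(φ_λ^{3,−2}) where φ_λ^{3,−2}(x) = e^{3λ}φ(e^{2λ}x). Then s'(λ) = P_k(φ_λ^{3,−2}) and s''(λ) ≤ 4 s'(λ) − 3 e^{6λ}∫|φ|⁴ ≤ 4 s'(λ) for all λ ∈ R. -/

import Mathlib

open MeasureTheory Real Filter Topology
open scoped ENNReal RealInnerProductSpace

noncomputable section

abbrev E3 : Type := EuclideanSpace ℝ (Fin 3)

/-- The potential `V(x) = k * |x| ^ (-α)`. -/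
def Vpot (k α : ℝ) (x : E3) : ℝ := k * ‖x‖ ^ (-α)

/-- The complex Laplacian (sum of second partial derivatives). -/
def lapC (f : E3 → ℂ) (x : E3) : ℂ :=
  ∑ i : Fin 3, fderiv ℝ (fun y => fderiv ℝ f y (EuclideanSpace.single i (1:ℝ))) x
    (EuclideanSpace.single i (1:ℝ))

/-- The real Laplacian. -/
def lapR (f : E3 → ℝ) (x : E3) : ℝ :=
  ∑ i : Fin 3, fderiv ℝ (fun y => fderiv ℝ f y (EuclideanSpace.single i (1:ℝ))) x
    (EuclideanSpace.single i (1:ℝ))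

/-- `∫ |∇φ|²`. -/
def gradSq (φ : E3 → ℂ) : ℝ := ∫ x, ‖fderiv ℝ φ x‖ ^ 2

/-- `∫ |φ|²`. -/
def massI (φ : E3 → ℂ) : ℝ := ∫ x, ‖φ x‖ ^ 2

/-- `∫ V |φ|²`. -/
def potI (k α : ℝ) (φ : E3 → ℂ) : ℝ := ∫ x, Vpot k α x * ‖φ x‖ ^ 2

/-- `∫ |φ|⁴`. -/
def quartI (φ : E3 → ℂ) : ℝ := ∫ x, ‖φ x‖ ^ 4

/-- `∫ (x · ∇V) |φ|²`. -/
def xdVI (k α : ℝ) (φ : E3 → ℂ) : ℝ :=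
  ∫ x, ⟪x, gradient (Vpot k α) x⟫ * ‖φ x‖ ^ 2

/-- `∫ (x ∇²V xᵀ) |φ|²`. -/
def hessI (k α : ℝ) (φ : E3 → ℂ) : ℝ :=
  ∫ x, ⟪x, fderiv ℝ (gradient (Vpot k α)) x x⟫ * ‖φ x‖ ^ 2

/-- Squared `𝓗¹_k` norm:  `∫|∇φ|² + ∫V|φ|² + ∫|φ|²`. -/
def H1kSq (k α : ℝ) (φ : E3 → ℂ) : ℝ := gradSq φ + potI k α φ + massI φ

/-- The action functional `S_k`. -/
def Sk (k α : ℝ) (φ : E3 → ℂ) : ℝ := (1/2) * H1kSq k α φ - (1/4) * quartI φ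

/-- The scaling-derivative functional `K_k^{a,b}`. -/
def Kab (k α a b : ℝ) (φ : E3 → ℂ) : ℝ :=
  ((2*a+b)/2) * gradSq φ + ((2*a+3*b)/2) * potI k α φ + (b/2) * xdVI k α φ
    + ((2*a+3*b)/2) * massI φ - ((4*a+3*b)/4) * quartI φ

/-- The virial functional `P_k = K_k^{3,-2}`. -/
def Pk (k α : ℝ) (φ : E3 → ℂ) : ℝ :=
  2 * gradSq φ - xdVI k α φ - (3/2) * quartI φ

/-- The functional `I_k = K_k^{3,0}/3`. -/
def Ik (k α : ℝ) (φ : E3 → ℂ) : ℝ :=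
  gradSq φ + potI k α φ + massI φ - quartI φ

/-- The functional `J_k^{a,b} = S_k - K_k^{a,b}/(2a+b)`. -/
def Jab (k α a b : ℝ) (φ : E3 → ℂ) : ℝ := Sk k α φ - Kab k α a b φ / (2*a+b)

/-- The scaling `φ_λ^{a,b}(x) = e^{aλ} φ(e^{-bλ} x)`. -/
def scal (a b lam : ℝ) (φ : E3 → ℂ) : E3 → ℂ :=
  fun x => Real.exp (a * lam) • φ (Real.exp (-b * lam) • x)

/-- Membership in `H¹(ℝ³)` (with the relevant integrability properties). -/
def InH1 (φ : E3 → ℂ) : Prop :=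
  MemLp φ 2 volume ∧ MemLp φ 4 volume ∧
    Integrable (fun x => ‖fderiv ℝ φ x‖ ^ 2) volume

/-- The minimization threshold `n_k^{a,b}`. -/
def nThresh (k α a b : ℝ) : ℝ :=
  sInf {r | ∃ φ : E3 → ℂ, InH1 φ ∧ eLpNorm φ 2 volume ≠ 0 ∧
    Kab k α a b φ = 0 ∧ r = Sk k α φ}

/-- The threshold `n_k` defined with the virial functional `P_k`. -/
def nPk (k α : ℝ) : ℝ :=
  sInf {r | ∃ φ : E3 → ℂ, InH1 φ ∧ eLpNorm φ 2 volume ≠ 0 ∧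
    Pk k α φ = 0 ∧ r = Sk k α φ}

/-- The ground state threshold `n₀`. -/
def n0 (α : ℝ) : ℝ := nPk 0 α

section Aux

lemma scal_eq (l : ℝ) (φ : E3 → ℂ) (x : E3) :
    scal 3 (-2) l φ x = Real.exp (3 * l) • φ (Real.exp (2 * l) • x) := by
  simp [scal]

lemma integral_comp_exp_smul (g : E3 → ℝ) (t : ℝ) :
    (∫ x : E3, g (Real.exp t • x)) = Real.exp (-(3 * t)) * ∫ x : E3, g x := by
  rw [MeasureTheory.Measure.integral_comp_smul volume g (Real.exp t), smul_eq_mul]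
  congr 1
  rw [finrank_euclideanSpace_fin, ← Real.exp_nat_mul, ← Real.exp_neg]
  rw [abs_of_pos (Real.exp_pos _)]
  norm_num

lemma massI_scal (φ : E3 → ℂ) (l : ℝ) : massI (scal 3 (-2) l φ) = massI φ := by
  unfold massI
  calc (∫ x : E3, ‖scal 3 (-2) l φ x‖ ^ 2)
      = ∫ x : E3, Real.exp (3 * l) ^ 2 * ‖φ (Real.exp (2 * l) • x)‖ ^ 2 := by
        congr 1; funext x
        rw [scal_eq, norm_smul, Real.norm_eq_abs, abs_of_pos (Real.exp_pos _), mul_pow]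
    _ = Real.exp (3 * l) ^ 2 *
        ∫ x : E3, (fun y => ‖φ y‖ ^ 2) (Real.exp (2 * l) • x) := by
        rw [MeasureTheory.integral_const_mul]
    _ = ∫ x : E3, ‖φ x‖ ^ 2 := by
        rw [integral_comp_exp_smul (fun y => ‖φ y‖ ^ 2) (2 * l), ← Real.exp_nat_mul,
          ← mul_assoc, ← Real.exp_add,
          show ((2 : ℕ) : ℝ) * (3 * l) + -(3 * (2 * l)) = 0 by push_cast; ring,
          Real.exp_zero, one_mul]

lemma quartI_scal (φ : E3 → ℂ) (l : ℝ) :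
    quartI (scal 3 (-2) l φ) = Real.exp (6 * l) * quartI φ := by
  unfold quartI
  calc (∫ x : E3, ‖scal 3 (-2) l φ x‖ ^ 4)
      = ∫ x : E3, Real.exp (3 * l) ^ 4 * ‖φ (Real.exp (2 * l) • x)‖ ^ 4 := by
        congr 1; funext x
        rw [scal_eq, norm_smul, Real.norm_eq_abs, abs_of_pos (Real.exp_pos _), mul_pow]
    _ = Real.exp (3 * l) ^ 4 *
        ∫ x : E3, (fun y => ‖φ y‖ ^ 4) (Real.exp (2 * l) • x) := by
        rw [MeasureTheory.integral_const_mul]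
    _ = Real.exp (6 * l) * ∫ x : E3, ‖φ x‖ ^ 4 := by
        rw [integral_comp_exp_smul (fun y => ‖φ y‖ ^ 4) (2 * l), ← Real.exp_nat_mul,
          ← mul_assoc, ← Real.exp_add]
        congr 2
        push_cast
        ring

lemma Vpot_smul (k α r : ℝ) (hr : 0 < r) (x : E3) :
    Vpot k α (r • x) = r ^ (-α) * Vpot k α x := by
  unfold Vpot
  rw [norm_smul, Real.norm_eq_abs, abs_of_pos hr, Real.mul_rpow hr.le (norm_nonneg x)]
  ring

lemma potI_scal (k α : ℝ) (φ : E3 → ℂ) (l : ℝ) :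
    potI k α (scal 3 (-2) l φ) = Real.exp (2 * α * l) * potI k α φ := by
  unfold potI
  calc (∫ x : E3, Vpot k α x * ‖scal 3 (-2) l φ x‖ ^ 2)
      = ∫ x : E3, (Real.exp (3 * l) ^ 2 * Real.exp (2 * l) ^ α) *
          (fun y => Vpot k α y * ‖φ y‖ ^ 2) (Real.exp (2 * l) • x) := by
        congr 1; funext x
        simp only
        rw [scal_eq, norm_smul, Real.norm_eq_abs, abs_of_pos (Real.exp_pos _), mul_pow,
          Vpot_smul k α _ (Real.exp_pos _) x]
        have hrr : Real.exp (2 * l) ^ α * Real.exp (2 * l) ^ (-α) = 1 := by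
          rw [← Real.rpow_add (Real.exp_pos _)]; simp
        linear_combination (-(Real.exp (3 * l) ^ 2 * Vpot k α x *
          ‖φ (Real.exp (2 * l) • x)‖ ^ 2)) * hrr
    _ = Real.exp (2 * α * l) * ∫ x : E3, Vpot k α x * ‖φ x‖ ^ 2 := by
        rw [MeasureTheory.integral_const_mul,
          integral_comp_exp_smul (fun y => Vpot k α y * ‖φ y‖ ^ 2) (2 * l),
          ← Real.exp_nat_mul, ← Real.exp_mul, ← mul_assoc, ← mul_assoc,
          ← Real.exp_add, ← Real.exp_add]
        congr 1
        push_cast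
        ring

lemma hasFDerivAt_scal (φ : E3 → ℂ) (hd : Differentiable ℝ φ) (c r : ℝ) (x : E3) :
    HasFDerivAt (fun x : E3 => c • φ (r • x)) ((c * r) • fderiv ℝ φ (r • x)) x := by
  have h1 : HasFDerivAt (fun y : E3 => r • y) (r • ContinuousLinearMap.id ℝ E3) x := by
    exact (hasFDerivAt_id x).const_smul r
  have h2 := ((hd (r • x)).hasFDerivAt.comp x h1).const_smul c
  exact h2.congr_fderiv (ContinuousLinearMap.ext fun y => by simp [mul_smul])

lemma gradSq_scal (φ : E3 → ℂ) (hd : Differentiable ℝ φ) (l : ℝ) :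
    gradSq (scal 3 (-2) l φ) = Real.exp (4 * l) * gradSq φ := by
  unfold gradSq
  calc (∫ x : E3, ‖fderiv ℝ (scal 3 (-2) l φ) x‖ ^ 2)
      = ∫ x : E3, Real.exp (5 * l) ^ 2 *
          (fun y => ‖fderiv ℝ φ y‖ ^ 2) (Real.exp (2 * l) • x) := by
        congr 1; funext x
        simp only
        have h := hasFDerivAt_scal φ hd (Real.exp (3 * l)) (Real.exp (2 * l)) x
        have heq : scal 3 (-2) l φ =
            fun x : E3 => Real.exp (3 * l) • φ (Real.exp (2 * l) • x) :=
          funext fun x => scal_eq l φ x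
        rw [heq, h.fderiv, norm_smul (Real.exp (3 * l) * Real.exp (2 * l))
          (fderiv ℝ φ (Real.exp (2 * l) • x)), Real.norm_eq_abs, ← Real.exp_add,
          abs_of_pos (Real.exp_pos _), mul_pow,
          show (3 : ℝ) * l + 2 * l = 5 * l by ring]
    _ = Real.exp (4 * l) * ∫ x : E3, ‖fderiv ℝ φ x‖ ^ 2 := by
        rw [MeasureTheory.integral_const_mul,
          integral_comp_exp_smul (fun y => ‖fderiv ℝ φ y‖ ^ 2) (2 * l),
          ← Real.exp_nat_mul, ← mul_assoc, ← Real.exp_add]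
        congr 2
        push_cast
        ring

lemma Vpot_eq (k α : ℝ) : Vpot k α = fun y : E3 => k * ((‖y‖ ^ 2 : ℝ)) ^ (-α / 2) := by
  funext y
  unfold Vpot
  congr 1
  rw [← Real.rpow_natCast ‖y‖ 2, ← Real.rpow_mul (norm_nonneg y),
    show ((2 : ℕ) : ℝ) * (-α / 2) = -α by push_cast; ring]

lemma inner_grad_Vpot (k α : ℝ) (hα : 0 < α) (x : E3) :
    ⟪x, gradient (Vpot k α) x⟫ = -α * Vpot k α x := by
  rcases eq_or_ne x 0 with rfl | hx
  · simp [Vpot, Real.zero_rpow (neg_ne_zero.mpr hα.ne')]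
  · have hn : (0 : ℝ) < ‖x‖ := norm_pos_iff.mpr hx
    have hsq : (0 : ℝ) < ‖x‖ ^ 2 := by positivity
    have h1 : HasFDerivAt (fun y : E3 => ((‖y‖ ^ 2 : ℝ)) ^ (-α / 2))
        ((-α / 2 * (‖x‖ ^ 2 : ℝ) ^ (-α / 2 - 1)) • ((2 : ℕ) • innerSL ℝ x)) x :=
      (hasStrictFDerivAt_norm_sq x).hasFDerivAt.rpow_const (Or.inl hsq.ne')
    have h2 : HasFDerivAt (Vpot k α)
        (k • ((-α / 2 * (‖x‖ ^ 2 : ℝ) ^ (-α / 2 - 1)) • ((2 : ℕ) • innerSL ℝ x))) x := by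
      rw [Vpot_eq k α]
      exact h1.const_mul k
    have hg : HasGradientAt (Vpot k α)
        ((k * (-α / 2 * (‖x‖ ^ 2 : ℝ) ^ (-α / 2 - 1)) * 2) • x) x := by
      rw [hasGradientAt_iff_hasFDerivAt]
      exact h2.congr_fderiv (ContinuousLinearMap.ext fun y => by
        simp [real_inner_smul_left, InnerProductSpace.toDual_apply_apply]
        ring)
    rw [hg.gradient, real_inner_smul_right, real_inner_self_eq_norm_sq]
    have e1 : ((‖x‖ ^ 2 : ℝ)) ^ (-α / 2 - 1) * (‖x‖ ^ 2 : ℝ) = ‖x‖ ^ (-α) := by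
      have e2 : ((‖x‖ ^ 2 : ℝ)) ^ (-α / 2 - 1) * ((‖x‖ ^ 2 : ℝ)) ^ (1 : ℝ)
          = ((‖x‖ ^ 2 : ℝ)) ^ (-α / 2) := by
        rw [← Real.rpow_add hsq]; norm_num
      rw [Real.rpow_one] at e2
      rw [e2, ← Real.rpow_natCast ‖x‖ 2, ← Real.rpow_mul (norm_nonneg x),
        show ((2 : ℕ) : ℝ) * (-α / 2) = -α by push_cast; ring]
    unfold Vpot
    linear_combination (-(α * k)) * e1

lemma xdVI_eq (k α : ℝ) (hα : 0 < α) (f : E3 → ℂ) : xdVI k α f = -α * potI k α f := by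
  unfold xdVI potI
  rw [← MeasureTheory.integral_const_mul]
  congr 1; funext x
  rw [inner_grad_Vpot k α hα x]; ring

end Aux
theorem stmt13 (k α : ℝ) (hk : 0 < k) (hα1 : 1 < α) (hα2 : α ≤ 2)
    (φ : E3 → ℂ) (hφ : InH1 φ) (hd : ContDiff ℝ 2 φ)
    (hpot : Integrable (fun x => Vpot k α x * ‖φ x‖ ^ 2) volume)
    (hxdv : Integrable (fun x => ⟪x, gradient (Vpot k α) x⟫ * ‖φ x‖ ^ 2) volume)
    (lam : ℝ) :
    HasDerivAt (fun l => Sk k α (scal 3 (-2) l φ)) (Pk k α (scal 3 (-2) lam φ)) lam ∧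
    deriv (deriv (fun l => Sk k α (scal 3 (-2) l φ))) lam
      ≤ 4 * deriv (fun l => Sk k α (scal 3 (-2) l φ)) lam
        - 3 * Real.exp (6 * lam) * quartI φ ∧
    4 * deriv (fun l => Sk k α (scal 3 (-2) l φ)) lam
        - 3 * Real.exp (6 * lam) * quartI φ
      ≤ 4 * deriv (fun l => Sk k α (scal 3 (-2) l φ)) lam := by
  have hα0 : (0 : ℝ) < α := lt_trans one_pos hα1
  have hdφ : Differentiable ℝ φ := hd.differentiable (by norm_num)
  have hQ : 0 ≤ potI k α φ := by
    unfold potI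
    apply MeasureTheory.integral_nonneg
    intro x
    exact mul_nonneg (mul_nonneg hk.le (Real.rpow_nonneg (norm_nonneg x) _)) (by positivity)
  have hF : 0 ≤ quartI φ := by
    unfold quartI
    apply MeasureTheory.integral_nonneg
    intro x
    positivity
  set G := gradSq φ with hGdef
  set Q := potI k α φ with hQdef
  set M := massI φ with hMdef
  set F := quartI φ with hFdef
  have hS : (fun l => Sk k α (scal 3 (-2) l φ))
      = fun l => (1 / 2) * (Real.exp (4 * l) * G + Real.exp (2 * α * l) * Q + M)
        - (1 / 4) * (Real.exp (6 * l) * F) := by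
    funext l
    rw [Sk, H1kSq, gradSq_scal φ hdφ l, potI_scal k α φ l, massI_scal φ l, quartI_scal φ l]
  have he : ∀ c l : ℝ, HasDerivAt (fun l => Real.exp (c * l)) (c * Real.exp (c * l)) l := by
    intro c l
    simpa [mul_comm] using ((hasDerivAt_id l).const_mul c).exp
  have hder : ∀ l, HasDerivAt
      (fun l => (1 / 2) * (Real.exp (4 * l) * G + Real.exp (2 * α * l) * Q + M)
        - (1 / 4) * (Real.exp (6 * l) * F))
      (2 * Real.exp (4 * l) * G + α * Real.exp (2 * α * l) * Q
        - (3 / 2) * (Real.exp (6 * l) * F)) l := by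
    intro l
    have h := ((((he 4 l).mul_const G).add ((he (2 * α) l).mul_const Q)).add_const M).const_mul
        ((1 : ℝ) / 2) |>.sub (((he 6 l).mul_const F).const_mul ((1 : ℝ) / 4))
    exact (h.congr_deriv (by ring)).congr_of_eventuallyEq
      (Filter.Eventually.of_forall fun x => by simp only [Pi.add_apply, Pi.sub_apply])
  have hP : Pk k α (scal 3 (-2) lam φ)
      = 2 * Real.exp (4 * lam) * G + α * Real.exp (2 * α * lam) * Q
        - (3 / 2) * (Real.exp (6 * lam) * F) := by
    rw [Pk, gradSq_scal φ hdφ, quartI_scal, xdVI_eq k α hα0, potI_scal k α φ]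
    ring
  have hd1 : deriv (fun l => Sk k α (scal 3 (-2) l φ))
      = fun l => 2 * Real.exp (4 * l) * G + α * Real.exp (2 * α * l) * Q
        - (3 / 2) * (Real.exp (6 * l) * F) := by
    rw [hS]
    funext l
    exact (hder l).deriv
  have hder2 : HasDerivAt (fun l => 2 * Real.exp (4 * l) * G + α * Real.exp (2 * α * l) * Q
        - (3 / 2) * (Real.exp (6 * l) * F))
      (8 * Real.exp (4 * lam) * G + α * (2 * α) * Real.exp (2 * α * lam) * Q
        - 9 * (Real.exp (6 * lam) * F)) lam := by
    have h := (((he 4 lam).mul_const G).const_mul 2).add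
        (((he (2 * α) lam).mul_const Q).const_mul α) |>.sub
        (((he 6 lam).mul_const F).const_mul ((3 : ℝ) / 2))
    exact (h.congr_deriv (by ring)).congr_of_eventuallyEq
      (Filter.Eventually.of_forall fun x => by simp only [Pi.add_apply, Pi.sub_apply]; ring)
  refine ⟨?_, ?_, ?_⟩
  · rw [hP, hS]
    exact hder lam
  · rw [hd1, hder2.deriv]
    simp only
    nlinarith [mul_nonneg (mul_nonneg (by nlinarith : (0 : ℝ) ≤ 2 * α * (2 - α))
      (Real.exp_pos (2 * α * lam)).le) hQ, mul_nonneg (Real.exp_pos (6 * lam)).le hF]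
  · nlinarith [mul_nonneg (Real.exp_pos (6 * lam)).le hF]
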